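/- Fix b ∈ ℂ with b^d = −2. For each a ∈ ℂ with a^d = 1, let T_a be the line a^{d−1}x + y + b^{d−1}z = 0 (the tangent line to the Fermat curve F_d at the sextactic point (a : 1 : b)). Then the point (0 : 2 : b) lies on T_a for every a with a^d = 1, and it is the unique point of ℙ²(ℂ) lying on all d of these tangent lines; thus the d tangent lines at the d sextactic points co-linear on the line z = (b/1)·y of the arrangement M meet in exactly one point, which lies on the line x = 0 and not on F_d. -/

import Mathlib

open scoped LinearAlgebra.Projectivization

/-- The point of `ℙ²(ℂ)` with homogeneous coordinates `v` (junk value if `v = 0`). -/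
noncomputable def P2mk (v : Fin 3 → ℂ) : ℙ ℂ (Fin 3 → ℂ) :=
  if hv : v ≠ 0 then Projectivization.mk ℂ v hv
  else Projectivization.mk ℂ ![1, 0, 0] (fun h => by simpa using congrFun h 0)

/-- Fix `b` with `b^d = -2`.  The point `(0 : 2 : b)` lies on the tangent line
`T_a : a^{d-1}x + y + b^{d-1}z = 0` to the Fermat curve `F_d` at the sextactic point
`(a : 1 : b)` for every `a` with `a^d = 1`, and it is the unique point of `ℙ²(ℂ)` lying
on all `d` of these tangent lines; it lies on the line `x = 0` and not on `F_d`. -/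
theorem fermat_tangents_at_colinear_sextactic_M (d : ℕ) (hd : 3 ≤ d)
    (b : ℂ) (hb : b ^ d = -2) :
    (∀ a : ℂ, a ^ d = 1 →
      a ^ (d - 1) * (P2mk ![0, 2, b]).rep 0 + (P2mk ![0, 2, b]).rep 1 +
        b ^ (d - 1) * (P2mk ![0, 2, b]).rep 2 = 0) ∧
    (P2mk ![0, 2, b]).rep 0 = 0 ∧
    (P2mk ![0, 2, b]).rep 0 ^ d + (P2mk ![0, 2, b]).rep 1 ^ d +
      (P2mk ![0, 2, b]).rep 2 ^ d ≠ 0 ∧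
    (∀ P : ℙ ℂ (Fin 3 → ℂ),
      (∀ a : ℂ, a ^ d = 1 →
        a ^ (d - 1) * P.rep 0 + P.rep 1 + b ^ (d - 1) * P.rep 2 = 0) →
      P = P2mk ![0, 2, b]) := by
  have hd0 : d ≠ 0 := by omega
  have hb0 : b ≠ 0 := by
    intro h; rw [h, zero_pow hd0] at hb; norm_num at hb
  have hv : (![0, 2, b] : Fin 3 → ℂ) ≠ 0 := fun h => by simpa using congrFun h 1
  have hP2 : P2mk ![0, 2, b] = Projectivization.mk ℂ ![0, 2, b] hv := dif_pos hv
  -- the representative is a nonzero multiple of (0, 2, b)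
  obtain ⟨c, hc⟩ := Projectivization.exists_smul_eq_mk_rep ℂ ![0, 2, b] hv
  rw [← hP2] at hc
  have h0 : (P2mk ![0, 2, b]).rep 0 = 0 := by
    rw [← hc]; simp
  have h1 : (P2mk ![0, 2, b]).rep 1 = 2 * c := by
    rw [← hc]; simp [Units.smul_def, mul_comm]
  have h2 : (P2mk ![0, 2, b]).rep 2 = c * b := by
    rw [← hc]; simp [Units.smul_def]
  have hbd1 : b ^ (d - 1) * b = -2 := by
    rw [← pow_succ, Nat.sub_add_cancel (by omega)]; exact hb
  have hc0 : (c : ℂ) ≠ 0 := c.ne_zero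
  refine ⟨?_, h0, ?_, ?_⟩
  · intro a ha
    rw [h0, h1, h2]
    linear_combination (c : ℂ) * hbd1
  · rw [h0, h1, h2, zero_pow hd0, mul_pow, mul_pow, hb]
    intro h
    have h2d : (2:ℂ)^d = 2 := by
      rcases mul_eq_zero.1 (show (c:ℂ)^d * (2^d - 2) = 0 by linear_combination h) with h' | h'
      · exact absurd h' (pow_ne_zero _ hc0)
      · linear_combination h'
    have hnat : (2:ℕ)^d = 2 := by exact_mod_cast h2d
    have := Nat.pow_le_pow_right (show 1 ≤ 2 by norm_num) hd
    simp at this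
    omega
  · intro P hP
    -- use a = 1 and a primitive d-th root ζ
    obtain ⟨ζ, hζ⟩ : ∃ ζ : ℂ, IsPrimitiveRoot ζ d := ⟨_, Complex.isPrimitiveRoot_exp d hd0⟩
    have hζd : ζ ^ d = 1 := hζ.pow_eq_one
    have hζne : ζ ^ (d - 1) ≠ 1 := by
      intro h
      have : ζ = 1 := by
        have := hζd
        rw [← Nat.sub_add_cancel (show 1 ≤ d by omega), pow_succ, h, one_mul] at this
        exact this
      exact (hζ.ne_one (by omega)) this
    have e1 := hP 1 (one_pow d)
    have e2 := hP ζ hζd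
    rw [one_pow] at e1
    have hx0 : P.rep 0 = 0 := by
      have : (1 - ζ ^ (d - 1)) * P.rep 0 = 0 := by linear_combination e1 - e2
      rcases mul_eq_zero.1 this with h | h
      · exact absurd (by linear_combination -h) hζne
      · exact h
    have hy : P.rep 1 = -(b ^ (d - 1)) * P.rep 2 := by
      rw [hx0] at e1; linear_combination e1
    have hz0 : P.rep 2 ≠ 0 := by
      intro h
      apply P.rep_nonzero
      funext i
      fin_cases i <;> simp [hx0, hy, h]
    rw [hP2, ← P.mk_rep]
    rw [Projectivization.mk_eq_mk_iff']
    refine ⟨P.rep 2 / b, ?_⟩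
    funext i
    fin_cases i
    · simpa using hx0.symm
    · show P.rep 2 / b * 2 = P.rep 1
      rw [hy]
      field_simp
      linear_combination hbd1
    · show P.rep 2 / b * b = P.rep 2
      field_simp
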